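/- arXiv:1901.02011 — 6 statements merged into one kernel-verified Lean document; each statement's English description precedes it below -/
import Mathlib

section
/- Let ρ_AB be a density state on H_A ⊗ H_B, s_AB its support projection, and let (a,b) ∈ End(H_A) × End(H_B). If (a ⊗ 1_B − 1_A ⊗ b)·s_AB = 0, then Tr(ρ_A a) = Tr(ρ_B b), and moreover Cov(a,b) = Var_A(a) = Var_B(b), where Cov and Var are the covariance and variances defined via ρ_AB, ρ_A, ρ_B with mean-subtracted operators. -/
open Matrix Kronecker
open ComplexOrder

/-- `s` is the support projection (the orthogonal projection onto the image) of `ρ`: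
it is a Hermitian idempotent acting as the identity on the range of `ρ` and
vanishing on its kernel. -/
def IsSuppProj {n : Type*} [Fintype n] (s ρ : Matrix n n ℂ) : Prop :=
  s.IsHermitian ∧ s * s = s ∧ s * ρ = ρ ∧ ∀ v : n → ℂ, ρ.mulVec v = 0 → s.mulVec v = 0

/-- A density state: a positive semidefinite operator of unit trace. -/
def IsDensity {n : Type*} [Fintype n] (ρ : Matrix n n ℂ) : Prop :=
  ρ.PosSemidef ∧ ρ.trace = 1

/-- Partial trace over the second (`B`) tensor factor. -/
noncomputable def traceRight {a b : Type*} [Fintype b] (M : Matrix (a × b) (a × b) ℂ) : Matrix a a ℂ :=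
  Matrix.of fun i j => ∑ k, M (i, k) (j, k)

/-- Partial trace over the first (`A`) tensor factor. -/
noncomputable def traceLeft {a b : Type*} [Fintype a] (M : Matrix (a × b) (a × b) ℂ) : Matrix b b ℂ :=
  Matrix.of fun i j => ∑ k, M (k, i) (k, j)

section Aux
variable {a b : Type*} [Fintype a] [DecidableEq a] [Fintype b] [DecidableEq b]

lemma sub_kron (A B : Matrix a a ℂ) (C : Matrix b b ℂ) :
    (A - B) ⊗ₖ C = A ⊗ₖ C - B ⊗ₖ C := by
  ext ⟨i,k⟩ ⟨j,l⟩; simp [Matrix.kroneckerMap_apply, sub_mul]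

lemma kron_sub (A : Matrix a a ℂ) (B C : Matrix b b ℂ) :
    A ⊗ₖ (B - C) = A ⊗ₖ B - A ⊗ₖ C := by
  ext ⟨i,k⟩ ⟨j,l⟩; simp [Matrix.kroneckerMap_apply, mul_sub]

lemma conjT_kron (A : Matrix a a ℂ) (B : Matrix b b ℂ) :
    (A ⊗ₖ B)ᴴ = Aᴴ ⊗ₖ Bᴴ := by
  ext ⟨i,k⟩ ⟨j,l⟩
  simp [Matrix.conjTranspose_apply, Matrix.kroneckerMap_apply, mul_comm]

lemma tr_right (ρ : Matrix (a × b) (a × b) ℂ) (x : Matrix a a ℂ) :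
    (ρ * (x ⊗ₖ (1 : Matrix b b ℂ))).trace = (traceRight ρ * x).trace := by
  simp only [Matrix.trace, Matrix.diag, Matrix.mul_apply, traceRight, Matrix.of_apply,
    Matrix.kroneckerMap_apply, Matrix.one_apply, Fintype.sum_prod_type, Finset.sum_mul,
    mul_ite, mul_one, mul_zero, Finset.sum_ite_eq', Finset.mem_univ, if_true]
  exact Finset.sum_congr rfl fun i _ => Finset.sum_comm

lemma tr_left (ρ : Matrix (a × b) (a × b) ℂ) (y : Matrix b b ℂ) :
    (ρ * ((1 : Matrix a a ℂ) ⊗ₖ y)).trace = (traceLeft ρ * y).trace := by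
  simp only [Matrix.trace, Matrix.diag, Matrix.mul_apply, traceLeft, Matrix.of_apply,
    Matrix.kroneckerMap_apply, Matrix.one_apply, Fintype.sum_prod_type, Finset.sum_mul,
    mul_ite, ite_mul, one_mul, zero_mul, mul_zero, Finset.sum_ite_eq', Finset.mem_univ, if_true]
  calc (∑ i : a, ∑ k : b, ∑ j : a, ∑ l : b,
          if j = i then ρ (i, k) (j, l) * y l k else 0)
      = ∑ i : a, ∑ k : b, ∑ l : b, ρ (i, k) (i, l) * y l k := by
        refine Finset.sum_congr rfl fun i _ => Finset.sum_congr rfl fun k _ => ?_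
        refine Finset.sum_comm.trans ?_
        simp
    _ = ∑ k : b, ∑ l : b, ∑ i : a, ρ (i, k) (i, l) * y l k :=
        Finset.sum_comm.trans (Finset.sum_congr rfl fun k _ => Finset.sum_comm)

end Aux

/-- If `(a ⊗ 1 - 1 ⊗ b)·s_AB = 0` then the expectation values agree and
the covariance saturates both variances. -/
theorem kernel_saturates_covariance
    {a b : Type*} [Fintype a] [DecidableEq a] [Fintype b] [DecidableEq b]
    (ρAB : Matrix (a × b) (a × b) ℂ) (hρ : IsDensity ρAB)
    (sAB : Matrix (a × b) (a × b) ℂ) (hsAB : IsSuppProj sAB ρAB)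
    (x : Matrix a a ℂ) (y : Matrix b b ℂ)
    (hker : (x ⊗ₖ (1 : Matrix b b ℂ) - (1 : Matrix a a ℂ) ⊗ₖ y) * sAB = 0) :
    let ρA := traceRight ρAB
    let ρB := traceLeft ρAB
    let x' := x - (ρA * x).trace • (1 : Matrix a a ℂ)
    let y' := y - (ρB * y).trace • (1 : Matrix b b ℂ)
    let Cov := (ρAB * (x' ⊗ₖ (1 : Matrix b b ℂ))ᴴ * ((1 : Matrix a a ℂ) ⊗ₖ y')).trace
    (ρA * x).trace = (ρB * y).trace ∧
      Cov = (ρA * x'ᴴ * x').trace ∧ Cov = (ρB * y'ᴴ * y').trace := by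
  obtain ⟨hpsd, -⟩ := hρ
  obtain ⟨-, -, hsρ, -⟩ := hsAB
  have hρH : ρABᴴ = ρAB := hpsd.1
  set M := x ⊗ₖ (1 : Matrix b b ℂ) - (1 : Matrix a a ℂ) ⊗ₖ y with hMdef
  have hMρ : M * ρAB = 0 := by rw [← hsρ, ← mul_assoc, hker, zero_mul]
  have hρM : ρAB * Mᴴ = 0 := by
    have h := congrArg Matrix.conjTranspose hMρ
    simpa [Matrix.conjTranspose_mul, hρH] using h
  intro ρA ρB x' y' Cov
  have hmean : (ρA * x).trace = (ρB * y).trace := by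
    have h1 : (x ⊗ₖ (1 : Matrix b b ℂ)) * ρAB = ((1 : Matrix a a ℂ) ⊗ₖ y) * ρAB := by
      have h := hMρ; rw [hMdef, sub_mul, sub_eq_zero] at h; exact h
    calc (ρA * x).trace = (ρAB * (x ⊗ₖ (1 : Matrix b b ℂ))).trace := (tr_right ρAB x).symm
      _ = ((x ⊗ₖ (1 : Matrix b b ℂ)) * ρAB).trace := Matrix.trace_mul_comm ..
      _ = (((1 : Matrix a a ℂ) ⊗ₖ y) * ρAB).trace := by rw [h1]
      _ = (ρAB * ((1 : Matrix a a ℂ) ⊗ₖ y)).trace := Matrix.trace_mul_comm ..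
      _ = (ρB * y).trace := tr_left ρAB y
  have hM' : x' ⊗ₖ (1 : Matrix b b ℂ) - (1 : Matrix a a ℂ) ⊗ₖ y' = M := by
    show (x - (ρA * x).trace • 1) ⊗ₖ (1 : Matrix b b ℂ)
        - (1 : Matrix a a ℂ) ⊗ₖ (y - (ρB * y).trace • 1) = M
    rw [sub_kron, kron_sub, Matrix.smul_kronecker, Matrix.kronecker_smul, hmean, hMdef]
    abel
  have hMρ' : (x' ⊗ₖ (1 : Matrix b b ℂ)) * ρAB = ((1 : Matrix a a ℂ) ⊗ₖ y') * ρAB := by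
    have h : M * ρAB = 0 := hMρ
    rw [← hM', sub_mul, sub_eq_zero] at h; exact h
  have hρM' : ρAB * (x'ᴴ ⊗ₖ (1 : Matrix b b ℂ)) = ρAB * ((1 : Matrix a a ℂ) ⊗ₖ y'ᴴ) := by
    have h : ρAB * Mᴴ = 0 := hρM
    rw [← hM', Matrix.conjTranspose_sub, conjT_kron, conjT_kron,
      Matrix.conjTranspose_one, Matrix.conjTranspose_one, mul_sub, sub_eq_zero] at h
    exact h
  have hct : (x' ⊗ₖ (1 : Matrix b b ℂ))ᴴ = x'ᴴ ⊗ₖ (1 : Matrix b b ℂ) := by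
    rw [conjT_kron, Matrix.conjTranspose_one]
  refine ⟨hmean, ?_, ?_⟩
  · calc Cov = (ρAB * (x'ᴴ ⊗ₖ (1 : Matrix b b ℂ)) * ((1 : Matrix a a ℂ) ⊗ₖ y')).trace := by
          rw [show Cov = (ρAB * (x' ⊗ₖ (1 : Matrix b b ℂ))ᴴ * ((1 : Matrix a a ℂ) ⊗ₖ y')).trace from rfl, hct]
      _ = (((1 : Matrix a a ℂ) ⊗ₖ y') * ρAB * (x'ᴴ ⊗ₖ (1 : Matrix b b ℂ))).trace := by
          rw [Matrix.trace_mul_cycle]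
      _ = ((x' ⊗ₖ (1 : Matrix b b ℂ)) * ρAB * (x'ᴴ ⊗ₖ (1 : Matrix b b ℂ))).trace := by
          rw [hMρ']
      _ = (ρAB * ((x'ᴴ ⊗ₖ (1 : Matrix b b ℂ)) * (x' ⊗ₖ (1 : Matrix b b ℂ)))).trace := by
          rw [Matrix.trace_mul_cycle ((x' ⊗ₖ (1 : Matrix b b ℂ))) ρAB, Matrix.trace_mul_comm]
      _ = (ρAB * ((x'ᴴ * x') ⊗ₖ (1 : Matrix b b ℂ))).trace := by
          rw [← Matrix.mul_kronecker_mul, one_mul]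
      _ = (ρA * (x'ᴴ * x')).trace := tr_right ρAB (x'ᴴ * x')
      _ = (ρA * x'ᴴ * x').trace := by rw [mul_assoc]
  · calc Cov = (ρAB * (x'ᴴ ⊗ₖ (1 : Matrix b b ℂ)) * ((1 : Matrix a a ℂ) ⊗ₖ y')).trace := by
          rw [show Cov = (ρAB * (x' ⊗ₖ (1 : Matrix b b ℂ))ᴴ * ((1 : Matrix a a ℂ) ⊗ₖ y')).trace from rfl, hct]
      _ = (ρAB * ((1 : Matrix a a ℂ) ⊗ₖ y'ᴴ) * ((1 : Matrix a a ℂ) ⊗ₖ y')).trace := by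
          rw [hρM']
      _ = (ρAB * ((1 : Matrix a a ℂ) ⊗ₖ (y'ᴴ * y'))).trace := by
          rw [mul_assoc, ← Matrix.mul_kronecker_mul, one_mul]
      _ = (ρB * (y'ᴴ * y')).trace := tr_left ρAB (y'ᴴ * y')
      _ = (ρB * y'ᴴ * y').trace := by rw [mul_assoc]
end

section
/- Let ψ ∈ H_A ⊗ H_B be a unit vector and ρ_AB = |ψ⟩⟨ψ| the associated pure bipartite density state. For any function f : ℝ → ℂ, the pair (f(ρ_A), f(ρ_B)) obtained by applying f via the spectral decompositions of the reduced states ρ_A = Tr_B(ρ_AB), ρ_B = Tr_A(ρ_AB) satisfies (f(ρ_A) ⊗ 1_B − 1_A ⊗ f(ρ_B)) · s_AB = 0, where s_AB is the support projection of ρ_AB (equivalently, (f(ρ_A) ⊗ 1_B) ψ = (1_A ⊗ f(ρ_B)) ψ). -/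
open Matrix Kronecker
open ComplexOrder

/-- Apply a function `f : ℝ → ℂ` to a Hermitian matrix through its spectral
decomposition, summing only over the nonzero eigenvalues (so the value `f 0` is
irrelevant). -/
noncomputable def specApply {m : Type*} [Fintype m] [DecidableEq m]
    {A : Matrix m m ℂ} (hA : A.IsHermitian) (f : ℝ → ℂ) : Matrix m m ℂ :=
  (hA.eigenvectorUnitary : Matrix m m ℂ) *
    Matrix.diagonal (fun i => if hA.eigenvalues i = 0 then 0 else f (hA.eigenvalues i)) *
    star (hA.eigenvectorUnitary : Matrix m m ℂ)

/-! ### Auxiliary lemmas -/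

/-- If `X * Y = Y * Z` then `p(X) * Y = Y * p(Z)` for any polynomial `p`. -/
lemma aeval_intertwine {n m : Type*} [Fintype n] [DecidableEq n] [Fintype m] [DecidableEq m]
    (X : Matrix n n ℂ) (Y : Matrix n m ℂ) (Z : Matrix m m ℂ)
    (h : X * Y = Y * Z) (p : Polynomial ℂ) :
    (Polynomial.aeval X p) * Y = Y * (Polynomial.aeval Z p) := by
  have hpow : ∀ k : ℕ, X ^ k * Y = Y * Z ^ k := by
    intro k
    induction k with
    | zero => simp
    | succ k ih =>
        rw [pow_succ, pow_succ, Matrix.mul_assoc, h, ← Matrix.mul_assoc, ih, Matrix.mul_assoc]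
  induction p using Polynomial.induction_on' with
  | add p q hp hq => simp [Matrix.add_mul, Matrix.mul_add, hp, hq]
  | monomial k c =>
      simp only [Polynomial.aeval_monomial, Algebra.algebraMap_eq_smul_one,
        Matrix.smul_mul, Matrix.mul_smul, Matrix.one_mul]
      rw [hpow k]

/-- `aeval` on a diagonal matrix is the diagonal of the pointwise evaluations. -/
lemma aeval_diagonal' {n : Type*} [Fintype n] [DecidableEq n] (d : n → ℂ) (p : Polynomial ℂ) :
    Polynomial.aeval (Matrix.diagonal d) p
      = Matrix.diagonal (fun i => p.eval (d i)) := by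
  have h1 : Polynomial.aeval ((Matrix.diagonalAlgHom ℂ : (n → ℂ) →ₐ[ℂ] Matrix n n ℂ) d) p
      = (Matrix.diagonalAlgHom ℂ : (n → ℂ) →ₐ[ℂ] Matrix n n ℂ) (Polynomial.aeval d p) :=
    Polynomial.aeval_algHom_apply _ d p
  have h2 : ∀ i, (Polynomial.aeval d p) i = p.eval (d i) := by
    intro i
    have := Polynomial.aeval_algHom_apply (Pi.evalAlgHom ℂ (fun _ : n => ℂ) i) d p
    rw [Polynomial.aeval_pi_apply₂, Polynomial.coe_aeval_eq_eval]
  rw [funext h2] at h1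
  exact h1

/-- `specApply` agrees with `aeval p` provided `p` evaluates correctly on eigenvalues. -/
lemma specApply_eq_aeval {m : Type*} [Fintype m] [DecidableEq m]
    {A : Matrix m m ℂ} (hA : A.IsHermitian) (f : ℝ → ℂ) (p : Polynomial ℂ)
    (hp : ∀ i, p.eval ((hA.eigenvalues i : ℝ) : ℂ)
      = if hA.eigenvalues i = 0 then 0 else f (hA.eigenvalues i)) :
    specApply hA f = Polynomial.aeval A p := by
  set U : Matrix m m ℂ := (hA.eigenvectorUnitary : Matrix m m ℂ) with hU
  have hUU : star U * U = 1 := by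
    simpa [hU] using congrArg (fun u => (u : Matrix m m ℂ)) (unitary.star_mul_self hA.eigenvectorUnitary)
  have hUU' : U * star U = 1 := by
    simpa [hU] using congrArg (fun u => (u : Matrix m m ℂ)) (unitary.mul_star_self hA.eigenvectorUnitary)
  set D : Matrix m m ℂ := Matrix.diagonal (RCLike.ofReal ∘ hA.eigenvalues) with hD
  have hspec : A = U * D * star U := hA.spectral_theorem
  have hcomm : A * U = U * D := by
    rw [hspec, mul_assoc, hUU, mul_one]
  have key : Polynomial.aeval A p * U = U * Polynomial.aeval D p :=
    aeval_intertwine A U D hcomm p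
  have : Polynomial.aeval A p = U * Polynomial.aeval D p * star U := by
    calc Polynomial.aeval A p = Polynomial.aeval A p * (U * star U) := by rw [hUU', mul_one]
      _ = (Polynomial.aeval A p * U) * star U := by rw [mul_assoc]
      _ = U * Polynomial.aeval D p * star U := by rw [key]
  have hfun : (fun i => if hA.eigenvalues i = 0 then 0 else f (hA.eigenvalues i))
      = fun i => p.eval ((RCLike.ofReal ∘ hA.eigenvalues) i) := by
    funext i
    simpa using (hp i).symm
  rw [this, hD, aeval_diagonal']
  unfold specApply
  rw [hfun]

/-- `mulVec` of a rank-one matrix. -/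
lemma vecMulVec_mulVec' {m n : Type*} [Fintype n] (w : m → ℂ) (u v : n → ℂ) :
    Matrix.vecMulVec w u *ᵥ v = (u ⬝ᵥ v) • w := by
  funext i
  simp only [Matrix.mulVec, dotProduct, Matrix.vecMulVec_apply, Pi.smul_apply,
    smul_eq_mul, Finset.sum_mul]
  exact Finset.sum_congr rfl fun j _ => by ring

/-- Multiplication of a matrix with a rank-one matrix. -/
lemma mul_vecMulVec' {l m n : Type*} [Fintype m] (M : Matrix l m ℂ) (w : m → ℂ) (u : n → ℂ) :
    M * Matrix.vecMulVec w u = Matrix.vecMulVec (M *ᵥ w) u := by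
  ext i j
  simp only [Matrix.mul_apply, Matrix.vecMulVec_apply, Matrix.mulVec, dotProduct,
    Finset.sum_mul]
  exact Finset.sum_congr rfl fun k _ => by ring

lemma kron_one_mulVec {a b : Type*} [Fintype a] [Fintype b] [DecidableEq b]
    (M : Matrix a a ℂ) (ψ : a × b → ℂ) (i : a) (j : b) :
    ((M ⊗ₖ (1 : Matrix b b ℂ)) *ᵥ ψ) (i, j)
      = (M * Matrix.of fun i j => ψ (i, j)) i j := by
  simp only [Matrix.mulVec, dotProduct, Fintype.sum_prod_type,
    Matrix.kroneckerMap_apply, Matrix.one_apply, Matrix.mul_apply, Matrix.of_apply]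
  refine Finset.sum_congr rfl fun k _ => ?_
  simp [mul_ite, ite_mul, Finset.sum_ite_eq]

lemma one_kron_mulVec {a b : Type*} [Fintype a] [Fintype b] [DecidableEq a]
    (N : Matrix b b ℂ) (ψ : a × b → ℂ) (i : a) (j : b) :
    (((1 : Matrix a a ℂ) ⊗ₖ N) *ᵥ ψ) (i, j)
      = ((Matrix.of fun i j => ψ (i, j)) * Nᵀ) i j := by
  simp only [Matrix.mulVec, dotProduct, Fintype.sum_prod_type,
    Matrix.kroneckerMap_apply, Matrix.one_apply, Matrix.mul_apply, Matrix.of_apply,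
    Matrix.transpose_apply]
  rw [Finset.sum_comm]
  simp [ite_mul, Finset.sum_ite_eq, mul_comm]

/-- `aeval` commutes with transpose. -/
lemma aeval_transpose' {n : Type*} [Fintype n] [DecidableEq n] (M : Matrix n n ℂ)
    (p : Polynomial ℂ) : Polynomial.aeval Mᵀ p = (Polynomial.aeval M p)ᵀ := by
  induction p using Polynomial.induction_on' with
  | add p q hp hq => simp [hp, hq]
  | monomial k c =>
      simp [Polynomial.aeval_monomial, Algebra.algebraMap_eq_smul_one, Matrix.smul_mul,
        Matrix.one_mul, Matrix.transpose_smul, Matrix.transpose_pow]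

/-- For a pure bipartite state `ρAB = |ψ⟩⟨ψ|` and any `f : ℝ → ℂ`, the
pair `(f(ρA), f(ρB))` satisfies `(f(ρA) ⊗ 1 - 1 ⊗ f(ρB))·s_AB = 0`. -/
theorem specApply_pair_cocycle
    {a b : Type*} [Fintype a] [DecidableEq a] [Fintype b] [DecidableEq b]
    (ψ : a × b → ℂ) (hψ : star ψ ⬝ᵥ ψ = 1)
    (ρAB : Matrix (a × b) (a × b) ℂ) (hρdef : ρAB = vecMulVec ψ (star ψ))
    (hA : (traceRight ρAB).IsHermitian) (hB : (traceLeft ρAB).IsHermitian)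
    (sAB : Matrix (a × b) (a × b) ℂ) (hsAB : IsSuppProj sAB ρAB)
    (f : ℝ → ℂ) :
    (specApply hA f ⊗ₖ (1 : Matrix b b ℂ) - (1 : Matrix a a ℂ) ⊗ₖ specApply hB f) * sAB
      = 0 := by
  classical
  obtain ⟨-, -, hsρ, hker⟩ := hsAB
  set Ψ : Matrix a b ℂ := Matrix.of fun i j => ψ (i, j) with hΨ
  have hρA : traceRight ρAB = Ψ * Ψᴴ := by
    ext i j
    simp [traceRight, hρdef, Matrix.vecMulVec_apply, Matrix.mul_apply,
      Matrix.conjTranspose_apply, hΨ]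
  have hρB : traceLeft ρAB = (Ψᴴ * Ψ)ᵀ := by
    ext i j
    simp [traceLeft, hρdef, Matrix.vecMulVec_apply, Matrix.mul_apply,
      Matrix.conjTranspose_apply, Matrix.transpose_apply, hΨ, mul_comm]
  -- the interpolating polynomial
  set S : Finset ℝ :=
    (Finset.univ.image hA.eigenvalues ∪ Finset.univ.image hB.eigenvalues) ∪ {0} with hS
  set r : ℝ → ℂ := fun x => if x = 0 then 0 else f x with hr
  set p : Polynomial ℂ := Lagrange.interpolate S (fun x : ℝ => (x : ℂ)) r with hpdef
  have hinj : Set.InjOn (fun x : ℝ => (x : ℂ)) S := fun x _ y _ h =>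
    Complex.ofReal_injective h
  have hevA : ∀ i, Polynomial.eval ((hA.eigenvalues i : ℝ) : ℂ) p
      = if hA.eigenvalues i = 0 then 0 else f (hA.eigenvalues i) := by
    intro i
    have hmem : hA.eigenvalues i ∈ S := by simp [hS]
    simpa [hr, hpdef] using Lagrange.eval_interpolate_at_node r hinj hmem
  have hevB : ∀ i, Polynomial.eval ((hB.eigenvalues i : ℝ) : ℂ) p
      = if hB.eigenvalues i = 0 then 0 else f (hB.eigenvalues i) := by
    intro i
    have hmem : hB.eigenvalues i ∈ S := by simp [hS]
    simpa [hr, hpdef] using Lagrange.eval_interpolate_at_node r hinj hmem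
  have hfA : specApply hA f = Polynomial.aeval (traceRight ρAB) p :=
    specApply_eq_aeval hA f p hevA
  have hfB : specApply hB f = Polynomial.aeval (traceLeft ρAB) p :=
    specApply_eq_aeval hB f p hevB
  have hkey : Polynomial.aeval (Ψ * Ψᴴ) p * Ψ = Ψ * Polynomial.aeval (Ψᴴ * Ψ) p :=
    aeval_intertwine _ _ _ (Matrix.mul_assoc Ψ Ψᴴ Ψ) p
  -- the support projection is the rank-one projector itself
  have hρψ : ρAB *ᵥ ψ = ψ := by rw [hρdef, vecMulVec_mulVec', hψ, one_smul]
  have hsψ : sAB *ᵥ ψ = ψ := by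
    have h := congrArg (fun M => M *ᵥ ψ) hsρ
    simpa [← Matrix.mulVec_mulVec, hρψ] using h
  have hsv : ∀ v, sAB *ᵥ v = ρAB *ᵥ v := by
    intro v
    have hv : ρAB *ᵥ (v - (star ψ ⬝ᵥ v) • ψ) = 0 := by
      rw [Matrix.mulVec_sub, Matrix.mulVec_smul, hρψ, hρdef, vecMulVec_mulVec', sub_self]
    have h1 := hker _ hv
    rw [Matrix.mulVec_sub, Matrix.mulVec_smul, hsψ, sub_eq_zero] at h1
    rw [h1, hρdef, vecMulVec_mulVec']
  have hs : sAB = ρAB := by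
    ext i j
    have := congrFun (hsv (Pi.single j 1)) i
    simpa [Matrix.mulVec_single, mul_one] using this
  rw [hs]
  rw [congrArg (fun M => (specApply hA f ⊗ₖ (1 : Matrix b b ℂ)
      - (1 : Matrix a a ℂ) ⊗ₖ specApply hB f) * M) hρdef, mul_vecMulVec']
  have hzero : (specApply hA f ⊗ₖ (1 : Matrix b b ℂ)
      - (1 : Matrix a a ℂ) ⊗ₖ specApply hB f) *ᵥ ψ = 0 := by
    funext ij
    obtain ⟨i, j⟩ := ij
    rw [Matrix.sub_mulVec]
    simp only [Pi.sub_apply, Pi.zero_apply]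
    rw [kron_one_mulVec, one_kron_mulVec]
    rw [hfA, hρA, hfB, hρB, aeval_transpose', Matrix.transpose_transpose]
    rw [show (Matrix.of fun i j => ψ (i, j)) = Ψ from rfl, hkey, sub_self]
  rw [hzero]
  ext i j
  simp [Matrix.vecMulVec_apply]
end

section
/- Let ρ_AB be a bipartite density state on H_A ⊗ H_B whose support projection equals s_A ⊗ s_B (support factorizable). If (a,b) ∈ (End(H_A)·s_A) × (End(H_B)·s_B) satisfies (a ⊗ 1_B − 1_A ⊗ b)·(s_A ⊗ s_B) = 0, then a = λ s_A and b = λ s_B for some λ ∈ ℂ. Consequently the zeroth GNS cohomology H⁰ = ker(d⁰)/span{(s_A, s_B)} vanishes. -/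
open Matrix Kronecker
open ComplexOrder

/-- For a support factorizable bipartite density state
(`s_AB = s_A ⊗ s_B`), any pair `(a,b) ∈ (End·s_A) × (End·s_B)` with
`(a ⊗ 1 - 1 ⊗ b)(s_A ⊗ s_B) = 0` is a scalar multiple of `(s_A, s_B)`;
hence the zeroth GNS cohomology vanishes. -/
theorem suppFact_kernel_is_trivial
    {a b : Type*} [Fintype a] [DecidableEq a] [Fintype b] [DecidableEq b]
    (ρAB : Matrix (a × b) (a × b) ℂ) (hρ : IsDensity ρAB)
    (sA : Matrix a a ℂ) (sB : Matrix b b ℂ) (sAB : Matrix (a × b) (a × b) ℂ)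
    (hsA : IsSuppProj sA (traceRight ρAB))
    (hsB : IsSuppProj sB (traceLeft ρAB))
    (hsAB : IsSuppProj sAB ρAB)
    (hfact : sAB = sA ⊗ₖ sB)
    (x : Matrix a a ℂ) (y : Matrix b b ℂ)
    (hx : ∃ r, x = r * sA) (hy : ∃ r, y = r * sB)
    (hker : (x ⊗ₖ (1 : Matrix b b ℂ) - (1 : Matrix a a ℂ) ⊗ₖ y) * (sA ⊗ₖ sB) = 0) :
    ∃ c : ℂ, x = c • sA ∧ y = c • sB := by
  obtain ⟨rx, hrx⟩ := hx
  obtain ⟨ry, hry⟩ := hy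
  obtain ⟨hA1, hA2, hA3, _⟩ := hsA
  obtain ⟨hB1, hB2, hB3, _⟩ := hsB
  have hxs : x * sA = x := by rw [hrx, mul_assoc, hA2]
  have hys : y * sB = y := by rw [hry, mul_assoc, hB2]
  have key : x ⊗ₖ sB = sA ⊗ₖ y := by
    have h := hker
    rw [sub_mul, ← Matrix.mul_kronecker_mul, ← Matrix.mul_kronecker_mul, Matrix.one_mul,
      Matrix.one_mul, hxs, hys, sub_eq_zero] at h
    exact h
  have htrA : (traceRight ρAB).trace = 1 := by
    rw [← hρ.2]
    simp [Matrix.trace, traceRight, Matrix.diag, Fintype.sum_prod_type]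
  have htrB : (traceLeft ρAB).trace = 1 := by
    rw [← hρ.2]
    simp [Matrix.trace, traceLeft, Matrix.diag, Fintype.sum_prod_type]
    rw [Finset.sum_comm]
  have hsAne : sA ≠ 0 := by
    intro h
    rw [← hA3, h, Matrix.zero_mul] at htrA
    simp [Matrix.trace] at htrA
  have hsBne : sB ≠ 0 := by
    intro h
    rw [← hB3, h, Matrix.zero_mul] at htrB
    simp [Matrix.trace] at htrB
  obtain ⟨i0, j0, hij⟩ : ∃ i j, sA i j ≠ 0 := by
    by_contra h
    push_neg at h
    exact hsAne (by ext i j; simpa using h i j)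
  obtain ⟨k0, l0, hkl⟩ : ∃ k l, sB k l ≠ 0 := by
    by_contra h
    push_neg at h
    exact hsBne (by ext k l; simpa using h k l)
  have entry : ∀ i j k l, x i j * sB k l = sA i j * y k l := by
    intro i j k l
    have h : (x ⊗ₖ sB) (i, k) (j, l) = (sA ⊗ₖ y) (i, k) (j, l) := by rw [key]
    simpa [Matrix.kroneckerMap_apply] using h
  set c : ℂ := y k0 l0 / sB k0 l0 with hc
  have hcx : ∀ i j, x i j = c * sA i j := by
    intro i j
    have h := entry i j k0 l0
    rw [hc]
    field_simp
    linear_combination h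
  refine ⟨c, ?_, ?_⟩
  · ext i j
    simp [hcx i j]
  · ext k l
    have h2 := entry i0 j0 k l
    have h3 : sA i0 j0 * y k l = sA i0 j0 * (c * sB k l) := by
      rw [← h2, hcx i0 j0]; ring
    have := mul_left_cancel₀ hij h3
    simpa using this
end

section
/- Vanishing of multipartite mutual information for factorizable states: Let P be a finite index set partitioned as P = Q ⊔ R with Q, R nonempty, and suppose ρ_P = ρ_Q ⊗ ρ_R is a tensor product density state on ⊗_{p∈P} H_p. Then the multipartite mutual information I(ρ_P) := Σ_{T ⊆ P} (−1)^{|T|−1} S(ρ_T) vanishes, where ρ_T is the reduced density state on ⊗_{t∈T} H_t and S is the von Neumann entropy. -/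
open Matrix
open ComplexOrder

/-- Glue a configuration on the subsystem `T` together with a configuration on its
complement into a configuration of the total system. -/
noncomputable def glueConfig {ι : Type*} [Fintype ι] [DecidableEq ι] {n : ι → Type*}
    (T : Finset ι) (x : ∀ t : {i // i ∈ T}, n t.1) (y : ∀ t : {i // i ∈ Tᶜ}, n t.1) :
    ∀ i, n i :=
  fun i => if h : i ∈ T then x ⟨i, h⟩ else y ⟨i, Finset.mem_compl.mpr h⟩

/-- The reduced density state on the subsystem `T ⊆ ι`, obtained by the partial trace
over the complementary tensor factors. -/
noncomputable def reduceState {ι : Type*} [Fintype ι] [DecidableEq ι]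
    {n : ι → Type*} [∀ i, Fintype (n i)] [∀ i, DecidableEq (n i)]
    (ρ : Matrix (∀ i, n i) (∀ i, n i) ℂ) (T : Finset ι) :
    Matrix (∀ t : {i // i ∈ T}, n t.1) (∀ t : {i // i ∈ T}, n t.1) ℂ :=
  Matrix.of fun x y => ∑ z : ∀ t : {i // i ∈ Tᶜ}, n t.1,
    ρ (glueConfig T x z) (glueConfig T y z)

open scoped Classical in
/-- The von Neumann entropy `-Tr(ρ log ρ)` of a (Hermitian) matrix, computed from its
eigenvalues, with the convention `0 log 0 = 0` (and junk value `0` on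
non-Hermitian input). -/
noncomputable def vnEntropy {m : Type*} [Fintype m] [DecidableEq m]
    (ρ : Matrix m m ℂ) : ℝ :=
  if h : ρ.IsHermitian then -∑ i, h.eigenvalues i * Real.log (h.eigenvalues i) else 0

namespace MIAux

open Polynomial
open scoped Kronecker

section Charpoly

variable {m : Type*} [Fintype m] [DecidableEq m]

lemma charpoly_conj (W M W' : Matrix m m ℂ) (h : W * W' = 1) :
    (W * M * W').charpoly = M.charpoly := by
  have hcomm : Matrix.scalar m (X : ℂ[X]) * W.map C = W.map C * Matrix.scalar m (X : ℂ[X]) :=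
    (Matrix.scalar_commute (X : ℂ[X]) (fun r => Commute.all _ _) (W.map C)).eq
  have hWW' : W.map C * W'.map C = 1 := by
    rw [← Matrix.map_mul, h, Matrix.map_one _ (map_zero C) (map_one C)]
  have hcm : charmatrix (W * M * W') = W.map C * charmatrix M * W'.map C := by
    unfold charmatrix
    rw [RingHom.mapMatrix_apply, RingHom.mapMatrix_apply, Matrix.map_mul, Matrix.map_mul,
      Matrix.mul_sub, Matrix.sub_mul]
    congr 1
    rw [← hcomm, mul_assoc, hWW', mul_one]
  rw [Matrix.charpoly, Matrix.charpoly, hcm, Matrix.det_mul, Matrix.det_mul]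
  calc (W.map C).det * (charmatrix M).det * (W'.map C).det
      = (charmatrix M).det * ((W.map C).det * (W'.map C).det) := by ring
    _ = (charmatrix M).det := by rw [← Matrix.det_mul, hWW', Matrix.det_one, mul_one]

lemma charpoly_diagonal (d : m → ℂ) : (Matrix.diagonal d).charpoly = ∏ i, (X - C (d i)) := by
  have h : charmatrix (Matrix.diagonal d) = Matrix.diagonal (fun i => X - C (d i)) := by
    ext i j
    by_cases hij : i = j
    · subst hij; simp [charmatrix_apply_eq]
    · simp [charmatrix_apply_ne _ _ _ hij, Matrix.diagonal_apply_ne _ hij]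
  rw [Matrix.charpoly, h, Matrix.det_diagonal]

/-- The multiset of eigenvalues of a Hermitian matrix. -/
noncomputable def eigMultiset {A : Matrix m m ℂ} (hA : A.IsHermitian) : Multiset ℝ :=
  Finset.univ.val.map hA.eigenvalues

lemma charpoly_eq_prod {A : Matrix m m ℂ} (hA : A.IsHermitian) :
    A.charpoly = ((eigMultiset hA).map (fun r : ℝ => X - C (r : ℂ))).prod := by
  conv_lhs => rw [hA.spectral_theorem, Unitary.conjStarAlgAut_apply]
  rw [charpoly_conj _ _ _ (mem_unitaryGroup_iff.mp (hA.eigenvectorUnitary).2),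
    charpoly_diagonal]
  rw [eigMultiset, Multiset.map_map, Finset.prod]
  rfl

lemma eigMultiset_unique {A : Matrix m m ℂ} (hA : A.IsHermitian) (s : Multiset ℝ)
    (h : A.charpoly = (s.map (fun r : ℝ => X - C (r : ℂ))).prod) :
    eigMultiset hA = s := by
  have key : ∀ t : Multiset ℝ,
      ((t.map (fun r : ℝ => X - C (r : ℂ))).prod).roots = t.map (fun r : ℝ => (r : ℂ)) := by
    intro t
    have h2 := Polynomial.roots_multiset_prod_X_sub_C (t.map (fun r : ℝ => (r : ℂ)))
    rwa [Multiset.map_map] at h2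
  have h3 : (eigMultiset hA).map (fun r : ℝ => (r : ℂ)) = s.map (fun r : ℝ => (r : ℂ)) := by
    rw [← key, ← key, ← h, ← charpoly_eq_prod hA]
  exact Multiset.map_injective Complex.ofReal_injective h3

lemma vnEntropy_eq {A : Matrix m m ℂ} (hA : A.IsHermitian) :
    vnEntropy A = -((eigMultiset hA).map (fun x : ℝ => x * Real.log x)).sum := by
  rw [vnEntropy, dif_pos hA]
  congr 1
  rw [eigMultiset, Multiset.map_map]
  rfl

lemma vnEntropy_submatrix {a : Type*} [Fintype a] [DecidableEq a]
    (e : a ≃ m) {A : Matrix m m ℂ} (hA : A.IsHermitian) :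
    vnEntropy (A.submatrix e e) = vnEntropy A := by
  have hA' : (A.submatrix e e).IsHermitian := hA.submatrix e
  rw [vnEntropy_eq hA', vnEntropy_eq hA]
  have h2 : eigMultiset hA' = eigMultiset hA := by
    apply eigMultiset_unique
    rw [← charpoly_eq_prod hA]
    have h1 : A.submatrix ⇑e ⇑e = Matrix.reindex e.symm e.symm A := by
      simp [Matrix.reindex_apply]
    rw [h1, Matrix.charpoly_reindex]
  rw [h2]

lemma kronecker_isHermitian {a b : Type*} [Fintype a] [DecidableEq a] [Fintype b] [DecidableEq b]
    {A : Matrix a a ℂ} {B : Matrix b b ℂ} (hA : A.IsHermitian) (hB : B.IsHermitian) :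
    (A ⊗ₖ B).IsHermitian := by
  ext ⟨i, j⟩ ⟨k, l⟩
  simp only [Matrix.conjTranspose_apply, Matrix.kroneckerMap_apply, star_mul']
  rw [← Matrix.conjTranspose_apply, ← Matrix.conjTranspose_apply, hA.eq, hB.eq]

lemma sum_eigenvalues_eq_one {A : Matrix m m ℂ} (hA : A.IsHermitian) (ht : A.trace = 1) :
    ∑ i, hA.eigenvalues i = 1 := by
  have h1 : A.trace = ∑ i, (hA.eigenvalues i : ℂ) := by
    conv_lhs => rw [hA.spectral_theorem, Unitary.conjStarAlgAut_apply]
    rw [Matrix.trace_mul_cycle,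
      mem_unitaryGroup_iff'.mp (hA.eigenvectorUnitary).2, one_mul, Matrix.trace_diagonal]
    rfl
  rw [ht] at h1
  have h2 : ((1 : ℝ) : ℂ) = ((∑ i, hA.eigenvalues i : ℝ) : ℂ) := by
    push_cast
    exact h1
  exact (Complex.ofReal_injective h2).symm

lemma vnEntropy_kronecker {a b : Type*} [Fintype a] [DecidableEq a] [Fintype b] [DecidableEq b]
    {A : Matrix a a ℂ} {B : Matrix b b ℂ} (hA : A.IsHermitian) (hB : B.IsHermitian)
    (hta : A.trace = 1) (htb : B.trace = 1) :
    vnEntropy (A ⊗ₖ B) = vnEntropy A + vnEntropy B := by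
  have hAB := kronecker_isHermitian hA hB
  have hme : eigMultiset hAB =
      Finset.univ.val.map (fun p : a × b => hA.eigenvalues p.1 * hB.eigenvalues p.2) := by
    apply eigMultiset_unique
    have hfac : A ⊗ₖ B =
        ((hA.eigenvectorUnitary : Matrix a a ℂ) ⊗ₖ (hB.eigenvectorUnitary : Matrix b b ℂ)) *
          ((Matrix.diagonal (RCLike.ofReal ∘ hA.eigenvalues)) ⊗ₖ
            (Matrix.diagonal (RCLike.ofReal ∘ hB.eigenvalues))) *
          ((star (hA.eigenvectorUnitary : Matrix a a ℂ)) ⊗ₖ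
            (star (hB.eigenvectorUnitary : Matrix b b ℂ))) := by
      rw [← Matrix.mul_kronecker_mul, ← Matrix.mul_kronecker_mul,
        ← Unitary.conjStarAlgAut_apply (S := ℂ), ← hA.spectral_theorem,
        ← Unitary.conjStarAlgAut_apply (S := ℂ), ← hB.spectral_theorem]
    rw [hfac, charpoly_conj, Matrix.diagonal_kronecker_diagonal, charpoly_diagonal]
    · rw [Multiset.map_map, Finset.prod]
      congr 1
      apply Multiset.map_congr rfl
      intro p _
      simp only [Function.comp_apply, ← RCLike.ofReal_mul]
      rfl
    · rw [← Matrix.mul_kronecker_mul,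
        mem_unitaryGroup_iff.mp (hA.eigenvectorUnitary).2,
        mem_unitaryGroup_iff.mp (hB.eigenvectorUnitary).2, Matrix.one_kronecker_one]
  have ha1 := sum_eigenvalues_eq_one hA hta
  have hb1 := sum_eigenvalues_eq_one hB htb
  rw [vnEntropy_eq hAB, vnEntropy_eq hA, vnEntropy_eq hB, hme]
  have hsum : ((Finset.univ.val.map (fun p : a × b => hA.eigenvalues p.1 * hB.eigenvalues p.2)).map
      (fun x : ℝ => x * Real.log x)).sum
      = ∑ p : a × b, (hA.eigenvalues p.1 * hB.eigenvalues p.2) *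
          Real.log (hA.eigenvalues p.1 * hB.eigenvalues p.2) := by
    rw [Multiset.map_map]; rfl
  rw [hsum]
  have key : ∀ x y : ℝ, (x * y) * Real.log (x * y)
      = y * (x * Real.log x) + x * (y * Real.log y) := by
    intro x y
    by_cases hx : x = 0
    · simp [hx]
    by_cases hy : y = 0
    · simp [hy]
    rw [Real.log_mul hx hy]; ring
  rw [Fintype.sum_prod_type]
  simp_rw [key]
  rw [show ((eigMultiset hA).map (fun x : ℝ => x * Real.log x)).sum
      = ∑ i, hA.eigenvalues i * Real.log (hA.eigenvalues i) by
    rw [eigMultiset, Multiset.map_map]; rfl]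
  rw [show ((eigMultiset hB).map (fun x : ℝ => x * Real.log x)).sum
      = ∑ j, hB.eigenvalues j * Real.log (hB.eigenvalues j) by
    rw [eigMultiset, Multiset.map_map]; rfl]
  simp_rw [Finset.sum_add_distrib, ← Finset.mul_sum, ← Finset.sum_mul, hb1, ha1]
  ring

end Charpoly

section Split

variable {ι : Type*} [Fintype ι] [DecidableEq ι] {n : ι → Type*}

noncomputable def glueCfgEquiv (T : Finset ι) :
    ((∀ t : {i // i ∈ T}, n t.1) × (∀ t : {i // i ∈ Tᶜ}, n t.1)) ≃ (∀ i, n i) where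
  toFun p := glueConfig T p.1 p.2
  invFun c := (fun t => c t.1, fun t => c t.1)
  left_inv p := by
    obtain ⟨x, z⟩ := p
    refine Prod.ext ?_ ?_
    · funext t
      simp only [glueConfig, dif_pos t.2]
    · funext t
      simp only [glueConfig, dif_neg (Finset.mem_compl.mp t.2)]
  right_inv c := by
    funext i
    by_cases h : i ∈ T <;> simp [glueConfig, h]

variable [∀ i, Fintype (n i)] [∀ i, DecidableEq (n i)]

lemma reduceState_isHermitian (ρ : Matrix (∀ i, n i) (∀ i, n i) ℂ)
    (hρ : ρ.IsHermitian) (T : Finset ι) : (reduceState ρ T).IsHermitian := by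
  ext x y
  simp only [Matrix.conjTranspose_apply, reduceState, Matrix.of_apply, star_sum]
  refine Finset.sum_congr rfl fun z _ => ?_
  rw [← Matrix.conjTranspose_apply, hρ.eq]

lemma trace_reduceState (ρ : Matrix (∀ i, n i) (∀ i, n i) ℂ) (T : Finset ι) :
    (reduceState ρ T).trace = ρ.trace := by
  rw [Matrix.trace, Matrix.trace]
  simp only [Matrix.diag_apply, reduceState, Matrix.of_apply]
  refine Eq.trans (Fintype.sum_prod_type
    (f := fun p : (∀ t : {i // i ∈ T}, n t.1) × (∀ t : {i // i ∈ Tᶜ}, n t.1) =>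
      ρ (glueConfig T p.1 p.2) (glueConfig T p.1 p.2))).symm ?_
  exact Fintype.sum_equiv (glueCfgEquiv T) _ _ (fun p => rfl)

variable (Q : Finset ι)

noncomputable def splitCfg (T : Finset ι) :
    (∀ t : {i // i ∈ T}, n t.1) ≃
      ((∀ s : {x : {i // i ∈ Q} // x ∈ T.subtype (· ∈ Q)}, n s.1.1) ×
       (∀ s : {x : {i // i ∈ Qᶜ} // x ∈ T.subtype (· ∈ Qᶜ)}, n s.1.1)) where
  toFun x := (fun s => x ⟨s.1.1, Finset.mem_subtype.mp s.2⟩,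
              fun s => x ⟨s.1.1, Finset.mem_subtype.mp s.2⟩)
  invFun p := fun t => if h : t.1 ∈ Q then p.1 ⟨⟨t.1, h⟩, Finset.mem_subtype.mpr t.2⟩
    else p.2 ⟨⟨t.1, Finset.mem_compl.mpr h⟩, Finset.mem_subtype.mpr t.2⟩
  left_inv x := by
    funext t
    by_cases h : t.1 ∈ Q
    · simp only [dif_pos h]
    · simp only [dif_neg h]
  right_inv p := by
    obtain ⟨a, b⟩ := p
    refine Prod.ext ?_ ?_
    · funext s
      simp only [dif_pos s.1.2]
    · funext s
      simp only [dif_neg (Finset.mem_compl.mp s.1.2)]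

noncomputable def splitCfgCompl (T : Finset ι) :
    (∀ t : {i // i ∈ Tᶜ}, n t.1) ≃
      ((∀ s : {x : {i // i ∈ Q} // x ∈ (T.subtype (· ∈ Q))ᶜ}, n s.1.1) ×
       (∀ s : {x : {i // i ∈ Qᶜ} // x ∈ (T.subtype (· ∈ Qᶜ))ᶜ}, n s.1.1)) where
  toFun z := (fun s => z ⟨s.1.1, Finset.mem_compl.mpr
                (fun hT => (Finset.mem_compl.mp s.2) (Finset.mem_subtype.mpr hT))⟩,
              fun s => z ⟨s.1.1, Finset.mem_compl.mpr
                (fun hT => (Finset.mem_compl.mp s.2) (Finset.mem_subtype.mpr hT))⟩)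
  invFun p := fun t =>
    if h : t.1 ∈ Q
    then p.1 ⟨⟨t.1, h⟩, by
      rw [Finset.mem_compl, Finset.mem_subtype]
      exact Finset.mem_compl.mp t.2⟩
    else p.2 ⟨⟨t.1, Finset.mem_compl.mpr h⟩, by
      rw [Finset.mem_compl, Finset.mem_subtype]
      exact Finset.mem_compl.mp t.2⟩
  left_inv z := by
    funext t
    by_cases h : t.1 ∈ Q
    · simp only [dif_pos h]
    · simp only [dif_neg h]
  right_inv p := by
    obtain ⟨a, b⟩ := p
    refine Prod.ext ?_ ?_
    · funext s
      simp only [dif_pos s.1.2]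
    · funext s
      simp only [dif_neg (Finset.mem_compl.mp s.1.2)]

lemma glue_comp_Q (T : Finset ι) (x : ∀ t : {i // i ∈ T}, n t.1)
    (z : ∀ t : {i // i ∈ Tᶜ}, n t.1) :
    (fun t : {i // i ∈ Q} => glueConfig T x z t.1)
      = glueConfig (T.subtype (· ∈ Q)) ((splitCfg Q T) x).1 ((splitCfgCompl Q T) z).1 := by
  funext t
  by_cases h : t.1 ∈ T
  · simp only [glueConfig, dif_pos h, dif_pos (Finset.mem_subtype.mpr h : t ∈ T.subtype (· ∈ Q))]
    rfl
  · simp only [glueConfig, dif_neg h,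
      dif_neg (fun hc => h (Finset.mem_subtype.mp hc) : ¬ t ∈ T.subtype (· ∈ Q))]
    rfl

lemma glue_comp_R (T : Finset ι) (x : ∀ t : {i // i ∈ T}, n t.1)
    (z : ∀ t : {i // i ∈ Tᶜ}, n t.1) :
    (fun t : {i // i ∈ Qᶜ} => glueConfig T x z t.1)
      = glueConfig (T.subtype (· ∈ Qᶜ)) ((splitCfg Q T) x).2 ((splitCfgCompl Q T) z).2 := by
  funext t
  by_cases h : t.1 ∈ T
  · simp only [glueConfig, dif_pos h, dif_pos (Finset.mem_subtype.mpr h : t ∈ T.subtype (· ∈ Qᶜ))]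
    rfl
  · simp only [glueConfig, dif_neg h,
      dif_neg (fun hc => h (Finset.mem_subtype.mp hc) : ¬ t ∈ T.subtype (· ∈ Qᶜ))]
    rfl

open scoped Kronecker in
lemma reduceState_factor (ρ : Matrix (∀ i, n i) (∀ i, n i) ℂ)
    (ρQ : Matrix (∀ t : {i // i ∈ Q}, n t.1) (∀ t : {i // i ∈ Q}, n t.1) ℂ)
    (ρR : Matrix (∀ t : {i // i ∈ Qᶜ}, n t.1) (∀ t : {i // i ∈ Qᶜ}, n t.1) ℂ)
    (hfact : ∀ x y : ∀ i, n i,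
      ρ x y = ρQ (fun t => x t.1) (fun t => y t.1) * ρR (fun t => x t.1) (fun t => y t.1))
    (T : Finset ι) :
    reduceState ρ T = ((reduceState ρQ (T.subtype (· ∈ Q))) ⊗ₖ
      (reduceState ρR (T.subtype (· ∈ Qᶜ)))).submatrix (splitCfg Q T) (splitCfg Q T) := by
  ext x y
  simp only [Matrix.submatrix_apply, Matrix.kroneckerMap_apply, reduceState, Matrix.of_apply]
  rw [Finset.sum_mul_sum]
  refine Eq.trans (Fintype.sum_equiv (splitCfgCompl Q T) _
    (fun p => ρQ (glueConfig (T.subtype (· ∈ Q)) ((splitCfg Q T) x).1 p.1)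
        (glueConfig (T.subtype (· ∈ Q)) ((splitCfg Q T) y).1 p.1) *
      ρR (glueConfig (T.subtype (· ∈ Qᶜ)) ((splitCfg Q T) x).2 p.2)
        (glueConfig (T.subtype (· ∈ Qᶜ)) ((splitCfg Q T) y).2 p.2)) fun z => ?_)
    (Fintype.sum_prod_type (f := fun p =>
      ρQ (glueConfig (T.subtype (· ∈ Q)) ((splitCfg Q T) x).1 p.1)
        (glueConfig (T.subtype (· ∈ Q)) ((splitCfg Q T) y).1 p.1) *
      ρR (glueConfig (T.subtype (· ∈ Qᶜ)) ((splitCfg Q T) x).2 p.2)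
        (glueConfig (T.subtype (· ∈ Qᶜ)) ((splitCfg Q T) y).2 p.2)))
  rw [hfact, glue_comp_Q, glue_comp_Q, glue_comp_R, glue_comp_R]

end Split

end MIAux

/-- If a multipartite density state over `P = Q ⊔ R` (with `Q`, `R`
nonempty) factorizes as `ρ_P = ρ_Q ⊗ ρ_R`, then the multipartite mutual information
`I(ρ_P) = Σ_{T ⊆ P} (-1)^{|T|-1} S(ρ_T)` vanishes. -/
theorem mutual_info_eq_zero_of_factorizable
    {ι : Type*} [Fintype ι] [DecidableEq ι]
    {n : ι → Type*} [∀ i, Fintype (n i)] [∀ i, DecidableEq (n i)]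
    (Q : Finset ι) (hQ : Q.Nonempty) (hR : (Qᶜ : Finset ι).Nonempty)
    (ρ : Matrix (∀ i, n i) (∀ i, n i) ℂ)
    (ρQ : Matrix (∀ t : {i // i ∈ Q}, n t.1) (∀ t : {i // i ∈ Q}, n t.1) ℂ)
    (ρR : Matrix (∀ t : {i // i ∈ Qᶜ}, n t.1) (∀ t : {i // i ∈ Qᶜ}, n t.1) ℂ)
    (hρ : IsDensity ρ) (hρQ : IsDensity ρQ) (hρR : IsDensity ρR)
    (hfact : ∀ x y : ∀ i, n i,
      ρ x y = ρQ (fun t => x t.1) (fun t => y t.1) * ρR (fun t => x t.1) (fun t => y t.1)) :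
    ∑ T : Finset ι, (-(-1 : ℝ) ^ T.card) * vnEntropy (reduceState ρ T) = 0 := by
  classical
  have hQh : ρQ.IsHermitian := hρQ.1.1
  have hRh : ρR.IsHermitian := hρR.1.1
  set F : Finset ι → ℝ := fun T => vnEntropy (reduceState ρQ (T.subtype (· ∈ Q))) with hF
  set G : Finset ι → ℝ := fun T => vnEntropy (reduceState ρR (T.subtype (· ∈ Qᶜ))) with hG
  have stepA : ∀ T : Finset ι, vnEntropy (reduceState ρ T) = F T + G T := by
    intro T
    rw [MIAux.reduceState_factor Q ρ ρQ ρR hfact T,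
      MIAux.vnEntropy_submatrix (MIAux.splitCfg Q T)
        (MIAux.kronecker_isHermitian
          (MIAux.reduceState_isHermitian ρQ hQh _)
          (MIAux.reduceState_isHermitian ρR hRh _))]
    exact MIAux.vnEntropy_kronecker
      (MIAux.reduceState_isHermitian ρQ hQh _)
      (MIAux.reduceState_isHermitian ρR hRh _)
      (by rw [MIAux.trace_reduceState]; exact hρQ.2)
      (by rw [MIAux.trace_reduceState]; exact hρR.2)
  have hS0 : ∀ s : Finset ι, s.Nonempty → ∑ V ∈ s.powerset, (-1 : ℝ) ^ V.card = 0 := by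
    intro s hs
    have h := Finset.sum_powerset_neg_one_pow_card_of_nonempty hs
    have h2 : ((∑ V ∈ s.powerset, (-1 : ℤ) ^ V.card : ℤ) : ℝ) = 0 := by rw [h]; norm_num
    rw [← h2]
    push_cast
    rfl
  have hunion : ∀ T : Finset ι, T ∩ Q ∪ T ∩ Qᶜ = T := by
    intro T
    rw [← Finset.inter_union_distrib_left, Finset.union_compl, Finset.inter_univ]
  calc ∑ T : Finset ι, (-(-1 : ℝ) ^ T.card) * vnEntropy (reduceState ρ T)
      = ∑ T ∈ (Finset.univ : Finset ι).powerset, (-(-1 : ℝ) ^ T.card) * (F T + G T) := by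
        rw [Finset.powerset_univ]
        exact Finset.sum_congr rfl fun T _ => by rw [stepA]
    _ = ∑ p ∈ Q.powerset ×ˢ Qᶜ.powerset,
          (-(-1 : ℝ) ^ (p.1 ∪ p.2).card) * (F (p.1 ∪ p.2) + G (p.1 ∪ p.2)) := by
        refine Finset.sum_nbij' (fun T => (T ∩ Q, T ∩ Qᶜ)) (fun p => p.1 ∪ p.2) ?_ ?_ ?_ ?_ ?_
        · intro T _
          exact Finset.mem_product.mpr ⟨Finset.mem_powerset.mpr Finset.inter_subset_right,
            Finset.mem_powerset.mpr Finset.inter_subset_right⟩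
        · intro p _
          exact Finset.mem_powerset.mpr (Finset.subset_univ _)
        · intro T _
          exact hunion T
        · intro p hp
          obtain ⟨hU, hV⟩ := Finset.mem_product.mp hp
          have hUQ : p.1 ⊆ Q := Finset.mem_powerset.mp hU
          have hVR : p.2 ⊆ Qᶜ := Finset.mem_powerset.mp hV
          have h1 : (p.1 ∪ p.2) ∩ Q = p.1 := by
            rw [Finset.union_inter_distrib_right, Finset.inter_eq_left.mpr hUQ,
              Finset.disjoint_iff_inter_eq_empty.mp
                (Finset.disjoint_left.mpr fun a ha hq => Finset.mem_compl.mp (hVR ha) hq),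
              Finset.union_empty]
          have h2 : (p.1 ∪ p.2) ∩ Qᶜ = p.2 := by
            rw [Finset.union_inter_distrib_right, Finset.inter_eq_left.mpr hVR,
              Finset.disjoint_iff_inter_eq_empty.mp
                (Finset.disjoint_left.mpr fun a ha hq => Finset.mem_compl.mp hq (hUQ ha)),
              Finset.empty_union]
          exact Prod.ext h1 h2
        · intro T _
          rw [hunion T]
    _ = ∑ U ∈ Q.powerset, ∑ V ∈ Qᶜ.powerset, (-(-1 : ℝ) ^ (U.card + V.card)) * (F U + G V) := by
        rw [Finset.sum_product]
        refine Finset.sum_congr rfl fun U hU => Finset.sum_congr rfl fun V hV => ?_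
        have hUQ : U ⊆ Q := Finset.mem_powerset.mp hU
        have hVR : V ⊆ Qᶜ := Finset.mem_powerset.mp hV
        have hdisj : Disjoint U V :=
          Finset.disjoint_left.mpr fun a ha hv => Finset.mem_compl.mp (hVR hv) (hUQ ha)
        have hFU : (U ∪ V).subtype (· ∈ Q) = U.subtype (· ∈ Q) := by
          ext x
          simp only [Finset.mem_subtype, Finset.mem_union]
          constructor
          · rintro (h | h)
            · exact h
            · exact absurd x.2 (Finset.mem_compl.mp (hVR h))
          · exact fun h => Or.inl h
        have hGV : (U ∪ V).subtype (· ∈ Qᶜ) = V.subtype (· ∈ Qᶜ) := by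
          ext x
          simp only [Finset.mem_subtype, Finset.mem_union]
          constructor
          · rintro (h | h)
            · exact absurd (hUQ h) (Finset.mem_compl.mp x.2)
            · exact h
          · exact fun h => Or.inr h
        have e1 : F (U ∪ V) = F U :=
          congrArg (fun S => vnEntropy (reduceState ρQ S)) hFU
        have e2 : G (U ∪ V) = G V :=
          congrArg (fun S => vnEntropy (reduceState ρR S)) hGV
        rw [Finset.card_union_of_disjoint hdisj, e1, e2]
    _ = ∑ U ∈ Q.powerset, (-(-1 : ℝ) ^ U.card) *
          (∑ V ∈ Qᶜ.powerset, (-1 : ℝ) ^ V.card * G V) := by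
        refine Finset.sum_congr rfl fun U _ => ?_
        have hptw : ∀ V ∈ Qᶜ.powerset, (-(-1 : ℝ) ^ (U.card + V.card)) * (F U + G V)
            = ((-1 : ℝ) ^ U.card * (- F U)) * (-1 : ℝ) ^ V.card
              + (-(-1 : ℝ) ^ U.card) * ((-1 : ℝ) ^ V.card * G V) := by
          intro V _
          rw [pow_add]
          ring
        rw [Finset.sum_congr rfl hptw, Finset.sum_add_distrib, ← Finset.mul_sum,
          ← Finset.mul_sum, hS0 _ hR, mul_zero, zero_add]
    _ = 0 := by
        rw [← Finset.sum_mul]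
        have h1 : ∑ U ∈ Q.powerset, (-(-1 : ℝ) ^ U.card) = 0 := by
          rw [Finset.sum_neg_distrib, hS0 _ hQ, neg_zero]
        rw [h1, zero_mul]
end

section
/- Multiplicativity of the state index: Let P = Q ⊔ R be a disjoint union of finite index sets with ρ_P = ρ_Q ⊗ ρ_R a tensor product density state. Fix complex parameters α, q, r and set D(T) = (dim H_T)^α · (Tr(ρ_T^q))^r for T ⊆ P (with D(∅) = 1). Define X(ρ_P) = Σ_{T⊆P} (−1)^{|T|} D(T). Then X(ρ_P) = X(ρ_Q)·X(ρ_R), where X(ρ_Q), X(ρ_R) are defined analogously using the reduced states of ρ_Q and ρ_R. -/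
open Matrix
open ComplexOrder

/-- `Tr(ρ^q)` for a natural power `q`, with the convention that `ρ^0` is the support
projection of `ρ` (so that `Tr(ρ^0) = rank ρ`). -/
noncomputable def trPow {m : Type*} [Fintype m] [DecidableEq m]
    (ρ : Matrix m m ℂ) (q : ℕ) : ℂ :=
  if q = 0 then (ρ.rank : ℂ) else (ρ ^ q).trace

/-- The state index `X(ρ) = Σ_{T ⊆ P} (-1)^{|T|} (dim H_T)^α (Tr ρ_T^q)^r` (at `w = 1`). -/
noncomputable def stateIndex {ι : Type*} [Fintype ι] [DecidableEq ι]
    {n : ι → Type*} [∀ i, Fintype (n i)] [∀ i, DecidableEq (n i)]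
    (ρ : Matrix (∀ i, n i) (∀ i, n i) ℂ) (α : ℂ) (q r : ℕ) : ℂ :=
  ∑ T : Finset ι, (-1 : ℂ) ^ T.card *
    ((Fintype.card (∀ t : {i // i ∈ T}, n t.1) : ℂ) ^ α * (trPow (reduceState ρ T) q) ^ r)

section Aux

open Kronecker TensorProduct

/-! ### rank of a Kronecker product -/

lemma finrank_range_map {K : Type*} [Field K] {M N M' N' : Type*}
    [AddCommGroup M] [Module K M] [AddCommGroup N] [Module K N]
    [AddCommGroup M'] [Module K M'] [AddCommGroup N'] [Module K N']
    (f : M →ₗ[K] M') (g : N →ₗ[K] N') :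
    Module.finrank K (LinearMap.range (TensorProduct.map f g)) =
      Module.finrank K (LinearMap.range f) * Module.finrank K (LinearMap.range g) := by
  have h1 : TensorProduct.map f g =
      (TensorProduct.mapIncl (LinearMap.range f) (LinearMap.range g)).comp
        (TensorProduct.map f.rangeRestrict g.rangeRestrict) := by
    rw [TensorProduct.mapIncl, ← TensorProduct.map_comp]
    rfl
  have hsurj : Function.Surjective (TensorProduct.map f.rangeRestrict g.rangeRestrict) :=
    TensorProduct.map_surjective f.surjective_rangeRestrict g.surjective_rangeRestrict
  have hinj : Function.Injective
      (TensorProduct.mapIncl (LinearMap.range f) (LinearMap.range g)) := by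
    have h2 : TensorProduct.mapIncl (LinearMap.range f) (LinearMap.range g) =
        (LinearMap.rTensor N' (LinearMap.range f).subtype).comp
          (LinearMap.lTensor (LinearMap.range f) (LinearMap.range g).subtype) := by
      apply TensorProduct.ext'
      intro x y
      rfl
    rw [h2, LinearMap.coe_comp]
    exact Function.Injective.comp
      (Module.Flat.rTensor_preserves_injective_linearMap _ (Submodule.injective_subtype _))
      (Module.Flat.lTensor_preserves_injective_linearMap _ (Submodule.injective_subtype _))
  rw [h1, LinearMap.range_comp, LinearMap.range_eq_top.mpr hsurj, Submodule.map_top]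
  rw [LinearMap.finrank_range_of_inj hinj, Module.finrank_tensorProduct]

lemma rank_kronecker' {K : Type*} [Field K] {m n : Type*} [Fintype m] [DecidableEq m]
    [Fintype n] [DecidableEq n] (A : Matrix m m K) (B : Matrix n n K) :
    (A ⊗ₖ B).rank = A.rank * B.rank := by
  classical
  let bm : Module.Basis m K (m → K) := Pi.basisFun K m
  let bn : Module.Basis n K (n → K) := Pi.basisFun K n
  rw [Matrix.rank_eq_finrank_range_toLin (A ⊗ₖ B) (bm.tensorProduct bn) (bm.tensorProduct bn),
    Matrix.toLin_kronecker, finrank_range_map,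
    ← Matrix.rank_eq_finrank_range_toLin A bm bm, ← Matrix.rank_eq_finrank_range_toLin B bn bn]

lemma kronecker_pow {m n : Type*} [Fintype m] [DecidableEq m] [Fintype n] [DecidableEq n]
    (A : Matrix m m ℂ) (B : Matrix n n ℂ) (q : ℕ) :
    (A ⊗ₖ B) ^ q = (A ^ q) ⊗ₖ (B ^ q) := by
  induction q with
  | zero => simp [Matrix.one_kronecker_one]
  | succ k ih => rw [pow_succ, pow_succ, pow_succ, ih, Matrix.mul_kronecker_mul]

lemma trace_reindex' {m n : Type*} [Fintype m] [Fintype n] (e : m ≃ n) (M : Matrix m m ℂ) :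
    (Matrix.reindex e e M).trace = M.trace := by
  simp only [Matrix.trace, Matrix.diag, Matrix.reindex_apply, Matrix.submatrix_apply]
  exact e.symm.sum_comp fun i => M i i

lemma trPow_kron {m n p : Type*} [Fintype m] [DecidableEq m] [Fintype n] [DecidableEq n]
    [Fintype p] [DecidableEq p] (e : p ≃ m × n)
    (A : Matrix m m ℂ) (B : Matrix n n ℂ) (M : Matrix p p ℂ)
    (h : M = Matrix.reindex e.symm e.symm (A ⊗ₖ B)) (q : ℕ) :
    trPow M q = trPow A q * trPow B q := by
  subst h
  unfold trPow
  rcases Nat.eq_zero_or_pos q with hq | hq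
  · simp only [hq, if_pos rfl]
    rw [Matrix.rank_reindex, rank_kronecker']
    push_cast
    ring
  · have hq' : q ≠ 0 := Nat.pos_iff_ne_zero.mp hq
    have h2 : (Matrix.reindex e.symm e.symm (A ⊗ₖ B)) ^ q
        = Matrix.reindex e.symm e.symm ((A ⊗ₖ B) ^ q) := by
      rw [← Matrix.reindexAlgEquiv_apply ℂ, ← map_pow, Matrix.reindexAlgEquiv_apply]
    rw [if_neg hq', if_neg hq', if_neg hq', h2, trace_reindex', kronecker_pow,
      Matrix.trace_kronecker]

/-! ### splitting configurations -/

variable {ι : Type*} [Fintype ι] [DecidableEq ι] {n : ι → Type*} (Q : Finset ι)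

/-- Split a configuration on `T` into its `Q`-part and `Qᶜ`-part. -/
def splitEquiv (T : Finset ι) (A : Finset {i // i ∈ Q}) (B : Finset {i // i ∈ Qᶜ})
    (hA : ∀ x : {i // i ∈ Q}, x ∈ A ↔ x.1 ∈ T)
    (hB : ∀ x : {i // i ∈ Qᶜ}, x ∈ B ↔ x.1 ∈ T) :
    (∀ t : {i // i ∈ T}, n t.1) ≃
      ((∀ a : {x : {i // i ∈ Q} // x ∈ A}, n a.1.1) ×
        (∀ b : {x : {i // i ∈ Qᶜ} // x ∈ B}, n b.1.1)) where
  toFun x := (fun a => x ⟨a.1.1, (hA a.1).mp a.2⟩, fun b => x ⟨b.1.1, (hB b.1).mp b.2⟩)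
  invFun y t := if h : t.1 ∈ Q then y.1 ⟨⟨t.1, h⟩, (hA ⟨t.1, h⟩).mpr t.2⟩
    else y.2 ⟨⟨t.1, Finset.mem_compl.mpr h⟩, (hB ⟨t.1, Finset.mem_compl.mpr h⟩).mpr t.2⟩
  left_inv x := by
    funext t
    dsimp only
    by_cases h : t.1 ∈ Q
    · rw [dif_pos h]
    · rw [dif_neg h]
  right_inv y := by
    refine Prod.ext ?_ ?_
    · funext a
      show (if h : a.1.1 ∈ Q then _ else _) = _
      rw [dif_pos a.1.2]
    · funext b
      show (if h : b.1.1 ∈ Q then _ else _) = _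
      rw [dif_neg (Finset.mem_compl.mp b.1.2)]

/-- The configuration equivalence for a subsystem `T`. -/
def configEquiv (T : Finset ι) :
    (∀ t : {i // i ∈ T}, n t.1) ≃
      ((∀ a : {x : {i // i ∈ Q} // x ∈ T.subtype (· ∈ Q)}, n a.1.1) ×
        (∀ b : {x : {i // i ∈ Qᶜ} // x ∈ T.subtype (· ∈ Qᶜ)}, n b.1.1)) :=
  splitEquiv Q T _ _ (fun _ => Finset.mem_subtype) (fun _ => Finset.mem_subtype)

/-- The configuration equivalence for the complement of a subsystem `T`. -/
def configEquivC (T : Finset ι) :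
    (∀ t : {i // i ∈ Tᶜ}, n t.1) ≃
      ((∀ a : {x : {i // i ∈ Q} // x ∈ (T.subtype (· ∈ Q))ᶜ}, n a.1.1) ×
        (∀ b : {x : {i // i ∈ Qᶜ} // x ∈ (T.subtype (· ∈ Qᶜ))ᶜ}, n b.1.1)) :=
  splitEquiv Q Tᶜ _ _
    (fun x => by simp [Finset.mem_subtype])
    (fun x => by simp [Finset.mem_subtype])

lemma glue_comp_fst (T : Finset ι) (x : ∀ t : {i // i ∈ T}, n t.1)
    (z : ∀ t : {i // i ∈ Tᶜ}, n t.1) :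
    (fun j : {i // i ∈ Q} => glueConfig T x z j.1) =
      glueConfig (T.subtype (· ∈ Q)) ((configEquiv Q T) x).1 ((configEquivC Q T) z).1 := by
  funext j
  simp only [glueConfig, configEquiv, configEquivC, splitEquiv, Equiv.coe_fn_mk]
  by_cases h : j.1 ∈ T
  · rw [dif_pos h, dif_pos (Finset.mem_subtype.mpr h)]
  · rw [dif_neg h, dif_neg (fun hc => h (Finset.mem_subtype.mp hc))]

lemma glue_comp_snd (T : Finset ι) (x : ∀ t : {i // i ∈ T}, n t.1)
    (z : ∀ t : {i // i ∈ Tᶜ}, n t.1) :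
    (fun j : {i // i ∈ Qᶜ} => glueConfig T x z j.1) =
      glueConfig (T.subtype (· ∈ Qᶜ)) ((configEquiv Q T) x).2 ((configEquivC Q T) z).2 := by
  funext j
  simp only [glueConfig, configEquiv, configEquivC, splitEquiv, Equiv.coe_fn_mk]
  by_cases h : j.1 ∈ T
  · rw [dif_pos h, dif_pos (Finset.mem_subtype.mpr h)]
  · rw [dif_neg h, dif_neg (fun hc => h (Finset.mem_subtype.mp hc))]

/-- The splitting of subsets of `ι` into subsets of `Q` and `Qᶜ`. -/
def finsetSplit : Finset ι ≃ Finset {i // i ∈ Q} × Finset {i // i ∈ Qᶜ} where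
  toFun T := (T.subtype (· ∈ Q), T.subtype (· ∈ Qᶜ))
  invFun p := p.1.map (Function.Embedding.subtype _) ∪ p.2.map (Function.Embedding.subtype _)
  left_inv T := by
    ext i
    simp only [Finset.mem_union, Finset.mem_map, Finset.mem_subtype,
      Function.Embedding.coe_subtype, Subtype.exists, exists_and_left, exists_prop,
      exists_eq_right_right, Finset.mem_compl]
    by_cases h : i ∈ Q <;> by_cases h2 : i ∈ T <;> simp [h, h2]
  right_inv p := by
    refine Prod.ext ?_ ?_
    · ext x
      rw [Finset.mem_subtype, Finset.mem_union, Finset.mem_map, Finset.mem_map]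
      simp only [Function.Embedding.coe_subtype]
      constructor
      · rintro (⟨a, ha, hax⟩ | ⟨b, hb, hbx⟩)
        · exact Subtype.ext hax ▸ ha
        · exact absurd x.2 (Finset.mem_compl.mp (hbx ▸ b.2))
      · intro hx
        exact Or.inl ⟨x, hx, rfl⟩
    · ext x
      rw [Finset.mem_subtype, Finset.mem_union, Finset.mem_map, Finset.mem_map]
      simp only [Function.Embedding.coe_subtype]
      constructor
      · rintro (⟨a, ha, hax⟩ | ⟨b, hb, hbx⟩)
        · exact absurd (Finset.mem_compl.mp x.2) (not_not.mpr (hax ▸ a.2))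
        · exact Subtype.ext hbx ▸ hb
      · intro hx
        exact Or.inr ⟨x, hx, rfl⟩

lemma card_split (T : Finset ι) :
    T.card = (T.subtype (· ∈ Q)).card + (T.subtype (· ∈ Qᶜ)).card := by
  rw [Finset.card_subtype, Finset.card_subtype]
  have h : T.filter (fun i => i ∈ Qᶜ) = T.filter (fun i => ¬ i ∈ Q) := by
    apply Finset.filter_congr
    intro i _
    simp
  rw [h, Finset.card_filter_add_card_filter_not]

end Aux

set_option maxHeartbeats 2000000 in
/-- Multiplicativity of the state index: if `ρ_P = ρ_Q ⊗ ρ_R` over a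
disjoint union `P = Q ⊔ R`, then `X(ρ_P) = X(ρ_Q)·X(ρ_R)`. -/
theorem stateIndex_multiplicative
    {ι : Type*} [Fintype ι] [DecidableEq ι]
    {n : ι → Type*} [∀ i, Fintype (n i)] [∀ i, DecidableEq (n i)]
    (Q : Finset ι)
    (ρ : Matrix (∀ i, n i) (∀ i, n i) ℂ)
    (ρQ : Matrix (∀ t : {i // i ∈ Q}, n t.1) (∀ t : {i // i ∈ Q}, n t.1) ℂ)
    (ρR : Matrix (∀ t : {i // i ∈ Qᶜ}, n t.1) (∀ t : {i // i ∈ Qᶜ}, n t.1) ℂ)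
    (hρ : IsDensity ρ) (hρQ : IsDensity ρQ) (hρR : IsDensity ρR)
    (hfact : ∀ x y : ∀ i, n i,
      ρ x y = ρQ (fun t => x t.1) (fun t => y t.1) * ρR (fun t => x t.1) (fun t => y t.1))
    (α : ℂ) (q r : ℕ) :
    stateIndex ρ α q r = stateIndex ρQ α q r * stateIndex ρR α q r := by
  classical
  open Kronecker in
  -- factorization of the reduced state
  have hred : ∀ T : Finset ι, reduceState ρ T =
      Matrix.reindex (configEquiv Q T).symm (configEquiv Q T).symm
        ((reduceState ρQ (T.subtype (· ∈ Q))) ⊗ₖ (reduceState ρR (T.subtype (· ∈ Qᶜ)))) := by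
    intro T
    ext x y
    rw [Matrix.reindex_apply, Matrix.submatrix_apply, Equiv.symm_symm,
      Matrix.kroneckerMap_apply]
    show (∑ z : ∀ t : {i // i ∈ Tᶜ}, n t.1,
        ρ (glueConfig T x z) (glueConfig T y z)) = _
    calc (∑ z : ∀ t : {i // i ∈ Tᶜ}, n t.1, ρ (glueConfig T x z) (glueConfig T y z))
        = ∑ z : ∀ t : {i // i ∈ Tᶜ}, n t.1,
            ρQ
              (glueConfig (T.subtype (· ∈ Q)) ((configEquiv Q T) x).1 ((configEquivC Q T) z).1)
              (glueConfig (T.subtype (· ∈ Q)) ((configEquiv Q T) y).1 ((configEquivC Q T) z).1) *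
            ρR
              (glueConfig (T.subtype (· ∈ Qᶜ)) ((configEquiv Q T) x).2 ((configEquivC Q T) z).2)
              (glueConfig (T.subtype (· ∈ Qᶜ)) ((configEquiv Q T) y).2 ((configEquivC Q T) z).2) := by
          refine Finset.sum_congr rfl fun z _ => ?_
          rw [hfact, glue_comp_fst, glue_comp_fst, glue_comp_snd, glue_comp_snd]
      _ = ∑ w : (∀ a : {x : {i // i ∈ Q} // x ∈ (T.subtype (· ∈ Q))ᶜ}, n a.1.1) ×
            (∀ b : {x : {i // i ∈ Qᶜ} // x ∈ (T.subtype (· ∈ Qᶜ))ᶜ}, n b.1.1),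
            ρQ (glueConfig (T.subtype (· ∈ Q)) ((configEquiv Q T) x).1 w.1)
              (glueConfig (T.subtype (· ∈ Q)) ((configEquiv Q T) y).1 w.1) *
            ρR (glueConfig (T.subtype (· ∈ Qᶜ)) ((configEquiv Q T) x).2 w.2)
              (glueConfig (T.subtype (· ∈ Qᶜ)) ((configEquiv Q T) y).2 w.2) :=
          Equiv.sum_comp (configEquivC Q T) (fun w =>
            ρQ (glueConfig (T.subtype (· ∈ Q)) ((configEquiv Q T) x).1 w.1)
              (glueConfig (T.subtype (· ∈ Q)) ((configEquiv Q T) y).1 w.1) *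
            ρR (glueConfig (T.subtype (· ∈ Qᶜ)) ((configEquiv Q T) x).2 w.2)
              (glueConfig (T.subtype (· ∈ Qᶜ)) ((configEquiv Q T) y).2 w.2))
      _ = _ := by
          rw [Fintype.sum_prod_type]
          dsimp only
          rw [← Finset.sum_mul_sum]
          rfl
  have hcard : ∀ T : Finset ι, (Fintype.card (∀ t : {i // i ∈ T}, n t.1)) =
      Fintype.card (∀ a : {x : {i // i ∈ Q} // x ∈ T.subtype (· ∈ Q)}, n a.1.1) *
      Fintype.card (∀ b : {x : {i // i ∈ Qᶜ} // x ∈ T.subtype (· ∈ Qᶜ)}, n b.1.1) := fun T => by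
    rw [Fintype.card_congr (configEquiv Q T), Fintype.card_prod]
  have hc : ∀ a b : ℕ, ((a * b : ℕ) : ℂ) ^ α = (a : ℂ) ^ α * (b : ℂ) ^ α := by
    intro a b
    push_cast
    rw [← Complex.ofReal_natCast a, ← Complex.ofReal_natCast b,
      ← Complex.mul_cpow_ofReal_nonneg (Nat.cast_nonneg a) (Nat.cast_nonneg b)]
  have key : ∀ T : Finset ι,
      (-1 : ℂ) ^ T.card * ((Fintype.card (∀ t : {i // i ∈ T}, n t.1) : ℂ) ^ α *
        (trPow (reduceState ρ T) q) ^ r)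
      = ((-1 : ℂ) ^ (T.subtype (· ∈ Q)).card *
          ((Fintype.card (∀ a : {x : {i // i ∈ Q} // x ∈ T.subtype (· ∈ Q)}, n a.1.1) : ℂ) ^ α *
            (trPow (reduceState ρQ (T.subtype (· ∈ Q))) q) ^ r)) *
        ((-1 : ℂ) ^ (T.subtype (· ∈ Qᶜ)).card *
          ((Fintype.card (∀ b : {x : {i // i ∈ Qᶜ} // x ∈ T.subtype (· ∈ Qᶜ)}, n b.1.1) : ℂ) ^ α *
            (trPow (reduceState ρR (T.subtype (· ∈ Qᶜ))) q) ^ r)) := by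
    intro T
    rw [card_split Q T, pow_add, trPow_kron (configEquiv Q T) _ _ _ (hred T) q,
      hcard T, hc, mul_pow]
    ring
  calc stateIndex ρ α q r
      = ∑ T : Finset ι,
          ((-1 : ℂ) ^ (T.subtype (· ∈ Q)).card *
            ((Fintype.card (∀ a : {x : {i // i ∈ Q} // x ∈ T.subtype (· ∈ Q)}, n a.1.1) : ℂ) ^ α *
              (trPow (reduceState ρQ (T.subtype (· ∈ Q))) q) ^ r)) *
          ((-1 : ℂ) ^ (T.subtype (· ∈ Qᶜ)).card *
            ((Fintype.card (∀ b : {x : {i // i ∈ Qᶜ} // x ∈ T.subtype (· ∈ Qᶜ)}, n b.1.1) : ℂ) ^ α *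
              (trPow (reduceState ρR (T.subtype (· ∈ Qᶜ))) q) ^ r)) :=
        Finset.sum_congr rfl fun T _ => key T
    _ = ∑ p : Finset {i // i ∈ Q} × Finset {i // i ∈ Qᶜ},
          ((-1 : ℂ) ^ p.1.card *
            ((Fintype.card (∀ a : {x : {i // i ∈ Q} // x ∈ p.1}, n a.1.1) : ℂ) ^ α *
              (trPow (reduceState ρQ p.1) q) ^ r)) *
          ((-1 : ℂ) ^ p.2.card *
            ((Fintype.card (∀ b : {x : {i // i ∈ Qᶜ} // x ∈ p.2}, n b.1.1) : ℂ) ^ α *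
              (trPow (reduceState ρR p.2) q) ^ r)) :=
        Equiv.sum_comp (finsetSplit Q) (fun p =>
          ((-1 : ℂ) ^ p.1.card *
            ((Fintype.card (∀ a : {x : {i // i ∈ Q} // x ∈ p.1}, n a.1.1) : ℂ) ^ α *
              (trPow (reduceState ρQ p.1) q) ^ r)) *
          ((-1 : ℂ) ^ p.2.card *
            ((Fintype.card (∀ b : {x : {i // i ∈ Qᶜ} // x ∈ p.2}, n b.1.1) : ℂ) ^ α *
              (trPow (reduceState ρR p.2) q) ^ r)))
    _ = stateIndex ρQ α q r * stateIndex ρR α q r := by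
        rw [Fintype.sum_prod_type]
        dsimp only
        rw [stateIndex, stateIndex, Finset.sum_mul_sum]
end

section
/- Integral representation and bounds for the W-state mutual information coefficient: For every integer d ≥ 2, −log(∏_{j=0}^{d−1} (j+1)^{(−1)^j · C(d−1,j)}) = ∫_0^1 (−(1−u)^{d−1}/log u) du, i.e., Σ_{j=0}^{d−1} (−1)^{j+1} C(d−1,j) log(j+1) = ∫_0^1 (1−u)^{d−1}/(−log u) du; consequently 1/(d(d−1)) ≤ Σ_{j=0}^{d−1} (−1)^{j+1} C(d−1,j) log(j+1) ≤ 1/(d−1). -/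
open MeasureTheory intervalIntegral Set Real

namespace WStateAux

lemma inner_int (u : ℝ) (hu : 0 < u) (hu1 : u ≠ 1) (c : ℝ) :
    ∫ s in (0:ℝ)..c, u ^ s = (u ^ c - 1) / Real.log u := by
  have hlu : Real.log u ≠ 0 := by
    simp only [ne_eq, Real.log_eq_zero, not_or]
    refine ⟨hu.ne', hu1, by nlinarith⟩
  have : ∀ s : ℝ, u ^ s = Real.exp (Real.log u * s) := fun s =>
    Real.rpow_def_of_pos hu s
  simp_rw [this]
  rw [intervalIntegral.integral_comp_mul_left Real.exp hlu, integral_exp]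
  simp only [smul_eq_mul, mul_zero, Real.exp_zero]
  field_simp

lemma key_integrable (c : ℝ) :
    Integrable (Function.uncurry fun u s => (u:ℝ) ^ (s:ℝ))
      ((volume.restrict (Ioc (0:ℝ) 1)).prod (volume.restrict (Ioc (0:ℝ) c))) := by
  set μ := (volume.restrict (Ioc (0:ℝ) 1)).prod (volume.restrict (Ioc (0:ℝ) c)) with hμ
  have hset : ∀ᵐ p : ℝ × ℝ ∂μ, p.1 ∈ Ioc (0:ℝ) 1 ∧ p.2 ∈ Ioc (0:ℝ) c := by
    rw [hμ, Measure.prod_restrict, ae_restrict_iff' (measurableSet_Ioc.prod measurableSet_Ioc)]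
    filter_upwards with p hp using hp
  have hmeas : AEStronglyMeasurable (Function.uncurry fun u s => (u:ℝ) ^ (s:ℝ)) μ := by
    apply AEStronglyMeasurable.congr
      (f := fun p : ℝ × ℝ => Real.exp (Real.log p.1 * p.2))
    · exact ((measurable_fst.log.mul measurable_snd).exp).aestronglyMeasurable
    · filter_upwards [hset] with p hp
      exact (Real.rpow_def_of_pos hp.1.1 p.2).symm
  haveI : IsFiniteMeasure μ := by
    constructor
    rw [hμ, ← Set.univ_prod_univ, Measure.prod_prod]
    simp only [Measure.restrict_apply MeasurableSet.univ, Set.univ_inter, Real.volume_Ioc]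
    exact ENNReal.mul_lt_top ENNReal.ofReal_lt_top ENNReal.ofReal_lt_top
  apply (integrable_const (1:ℝ)).mono' hmeas
  filter_upwards [hset] with p hp
  have : Function.uncurry (fun u s => (u:ℝ) ^ (s:ℝ)) p = p.1 ^ p.2 := rfl
  rw [this, Real.norm_eq_abs, abs_of_nonneg (Real.rpow_nonneg hp.1.1.le _)]
  exact Real.rpow_le_one hp.1.1.le hp.1.2 hp.2.1.le

lemma ae_ne (c : ℝ) : ∀ᵐ u : ℝ ∂volume, u ≠ c := by
  rw [ae_iff]
  have : {u : ℝ | ¬ u ≠ c} = {c} := by ext x; simp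
  rw [this]
  exact Real.volume_singleton

lemma frullani (n : ℕ) :
    ∫ u in Ioc (0:ℝ) 1, ((u ^ n - 1) / Real.log u) = Real.log (n + 1) := by
  have swap := integral_integral_swap (key_integrable (n : ℝ))
  have hL : (∫ u in Ioc (0:ℝ) 1, ∫ s in Ioc (0:ℝ) (n:ℝ), u ^ s)
      = ∫ u in Ioc (0:ℝ) 1, ((u ^ n - 1) / Real.log u) := by
    apply MeasureTheory.integral_congr_ae
    filter_upwards [ae_restrict_mem measurableSet_Ioc, ae_restrict_of_ae (ae_ne 1)]
      with u hu hu1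
    rw [← intervalIntegral.integral_of_le (by positivity : (0:ℝ) ≤ (n:ℝ)),
      inner_int u hu.1 hu1, Real.rpow_natCast]
  have hR : (∫ s in Ioc (0:ℝ) (n:ℝ), ∫ u in Ioc (0:ℝ) 1, u ^ s)
      = Real.log (n + 1) := by
    have h1 : (∫ s in Ioc (0:ℝ) (n:ℝ), ∫ u in Ioc (0:ℝ) 1, u ^ s)
        = ∫ s in Ioc (0:ℝ) (n:ℝ), (s + 1)⁻¹ := by
      apply setIntegral_congr_fun measurableSet_Ioc
      intro s hs
      dsimp only
      rw [← intervalIntegral.integral_of_le (zero_le_one),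
        integral_rpow (Or.inl (by linarith [hs.1]))]
      rw [Real.one_rpow, Real.zero_rpow (by linarith [hs.1])]
      rw [sub_zero, one_div]
    have h2 : (∫ s in (0:ℝ)..(n:ℝ), (s + 1)⁻¹) = ∫ x in (0+1:ℝ)..((n:ℝ)+1), x⁻¹ :=
      intervalIntegral.integral_comp_add_right (fun x => x⁻¹) 1
    have hn1 : (1:ℝ) ≤ (n:ℝ) + 1 := by linarith [Nat.cast_nonneg (α := ℝ) n]
    rw [h1, ← intervalIntegral.integral_of_le (by positivity : (0:ℝ) ≤ (n:ℝ)), h2, zero_add,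
      integral_inv (by rw [Set.uIcc_of_le hn1]; rintro ⟨h, -⟩; norm_num at h),
      div_one]
  rw [← hL, swap, hR]

lemma frullani_integrable (n : ℕ) :
    IntegrableOn (fun u => (u ^ n - 1) / Real.log u) (Ioc (0:ℝ) 1) := by
  have h := (key_integrable (n : ℝ)).integral_prod_left
  apply h.congr
  filter_upwards [ae_restrict_mem measurableSet_Ioc, ae_restrict_of_ae (ae_ne 1)]
    with u hu hu1
  have : (fun s : ℝ => Function.uncurry (fun u s => (u:ℝ) ^ (s:ℝ)) (u, s))
      = fun s : ℝ => u ^ s := rfl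
  rw [this]
  rw [← intervalIntegral.integral_of_le (by positivity : (0:ℝ) ≤ (n:ℝ)),
    inner_int u hu.1 hu1, Real.rpow_natCast]

lemma sum_identity (m : ℕ) (hm : 1 ≤ m) (u : ℝ) :
    ∑ j ∈ Finset.range (m+1), (-1:ℝ)^(j+1) * (m.choose j : ℝ) * ((u^j - 1)/Real.log u)
      = (1-u)^m / (-Real.log u) := by
  have key : ∑ j ∈ Finset.range (m+1), (-1:ℝ)^(j+1) * (m.choose j : ℝ) * (u^j - 1)
      = -(1-u)^m := by
    have e1 : ∀ j ∈ Finset.range (m+1), (-1:ℝ)^(j+1) * (m.choose j : ℝ) * (u^j - 1)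
        = -((-u)^j * 1^(m-j) * (m.choose j)) + ((-1:ℝ)^j * 1^(m-j) * (m.choose j)) := by
      intro j _
      rw [pow_succ, neg_pow, one_pow]
      ring
    rw [Finset.sum_congr rfl e1, Finset.sum_add_distrib, Finset.sum_neg_distrib,
      ← add_pow, ← add_pow]
    rw [neg_add_cancel, zero_pow (by omega), add_zero]
    ring_nf
  calc ∑ j ∈ Finset.range (m+1), (-1:ℝ)^(j+1) * (m.choose j : ℝ) * ((u^j - 1)/Real.log u)
      = (∑ j ∈ Finset.range (m+1), (-1:ℝ)^(j+1) * (m.choose j : ℝ) * (u^j - 1))/Real.log u := by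
        rw [Finset.sum_div]; exact Finset.sum_congr rfl fun j _ => by ring
    _ = (1-u)^m / (-Real.log u) := by rw [key, div_neg, neg_div]

lemma neg_log_pos {u : ℝ} (h0 : 0 < u) (h1 : u < 1) : 0 < -Real.log u := by
  have := Real.log_neg h0 h1; linarith

lemma upper_pt (m : ℕ) (hm : 1 ≤ m) {u : ℝ} (h0 : 0 < u) (h1 : u < 1) :
    (1-u)^m/(-Real.log u) ≤ (1-u)^(m-1) := by
  have hl := neg_log_pos h0 h1
  rw [div_le_iff₀ hl]
  have hpow : (1-u)^m = (1-u)^(m-1) * (1-u) := by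
    rw [← pow_succ]; congr 1; omega
  rw [hpow]
  apply mul_le_mul_of_nonneg_left _ (pow_nonneg (by linarith) _)
  have := Real.log_le_sub_one_of_pos h0
  linarith

lemma lower_pt (m : ℕ) (hm : 1 ≤ m) {u : ℝ} (h0 : 0 < u) (h1 : u < 1) :
    u * (1-u)^(m-1) ≤ (1-u)^m/(-Real.log u) := by
  have hl := neg_log_pos h0 h1
  rw [le_div_iff₀ hl]
  have hb : -Real.log u ≤ (1-u)/u := by
    have h2 := Real.log_le_sub_one_of_pos (show (0:ℝ) < u⁻¹ by positivity)
    rw [Real.log_inv] at h2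
    have : u⁻¹ - 1 = (1-u)/u := by field_simp
    linarith [this ▸ h2]
  have hpow : (1-u)^m = (1-u)^(m-1) * (1-u) := by
    rw [← pow_succ]; congr 1; omega
  calc u * (1-u)^(m-1) * (-Real.log u)
      ≤ u * (1-u)^(m-1) * ((1-u)/u) := by
        apply mul_le_mul_of_nonneg_left hb
        have : (0:ℝ) ≤ 1 - u := by linarith
        positivity
    _ = (1-u)^m := by rw [hpow]; field_simp

lemma int_upper (k : ℕ) :
    ∫ u in (0:ℝ)..1, (1-u)^k = 1/((k:ℝ)+1) := by
  have h := intervalIntegral.integral_comp_sub_left (fun x : ℝ => x^k) 1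
    (a := 0) (b := 1)
  simp only [sub_self, sub_zero] at h
  rw [h, integral_pow, one_pow, zero_pow (by omega), sub_zero, one_div]

lemma int_lower (k : ℕ) :
    ∫ u in (0:ℝ)..1, u * (1-u)^k = 1/(((k:ℝ)+1)*((k:ℝ)+2)) := by
  have h := intervalIntegral.integral_comp_sub_left
    (fun x : ℝ => (1-x) * x^k) 1 (a := 0) (b := 1)
  simp only [sub_sub_cancel, sub_self, sub_zero] at h
  rw [h]
  have h2 : ∀ x : ℝ, (1-x) * x^k = x^k - x^(k+1) := by
    intro x; rw [pow_succ]; ring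
  simp_rw [h2]
  rw [intervalIntegral.integral_sub (by apply Continuous.intervalIntegrable; continuity)
    (by apply Continuous.intervalIntegrable; continuity), integral_pow, integral_pow]
  rw [one_pow, one_pow, zero_pow (by omega), zero_pow (by omega)]
  push_cast
  have hk1 : ((k:ℝ) + 1) ≠ 0 := by positivity
  have hk2 : ((k:ℝ) + 1 + 1) ≠ 0 := by positivity
  have hk3 : ((k:ℝ) + 2) ≠ 0 := by positivity
  rw [div_sub_div _ _ hk1 hk2, div_eq_div_iff (by positivity) (by positivity)]
  ring

lemma h_integrable (m : ℕ) (hm : 1 ≤ m) :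
    IntervalIntegrable (fun u : ℝ => (1-u)^m/(-Real.log u)) volume 0 1 := by
  rw [intervalIntegrable_iff_integrableOn_Ioc_of_le zero_le_one]
  have hmeas : Measurable fun u : ℝ => (1-u)^m/(-Real.log u) :=
    ((measurable_const.sub measurable_id).pow_const m).div Real.measurable_log.neg
  apply (integrable_const (1:ℝ)).mono' hmeas.aestronglyMeasurable
  filter_upwards [ae_restrict_mem measurableSet_Ioc, ae_restrict_of_ae (ae_ne 1)]
    with u hu hu1
  have h0 : 0 < u := hu.1
  have h1 : u < 1 := lt_of_le_of_ne hu.2 hu1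
  have hnn : 0 ≤ (1-u)^m/(-Real.log u) := by
    apply div_nonneg (pow_nonneg (by linarith) _) (neg_log_pos h0 h1).le
  rw [Real.norm_eq_abs, abs_of_nonneg hnn]
  calc (1-u)^m/(-Real.log u) ≤ (1-u)^(m-1) := upper_pt m hm h0 h1
    _ ≤ 1 := pow_le_one₀ (by linarith) (by linarith)

end WStateAux


set_option maxHeartbeats 1000000 in
open WStateAux in
/-- Integral representation and bounds for the W-state mutual
information coefficient: for `d ≥ 2`,
`Σ_{j=0}^{d-1} (-1)^{j+1} C(d-1,j) log(j+1) = ∫_0^1 (1-u)^{d-1}/(-log u) du`, and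
`1/(d(d-1)) ≤ Σ_{j=0}^{d-1} (-1)^{j+1} C(d-1,j) log(j+1) ≤ 1/(d-1)`. -/
theorem w_state_integral_and_bounds (d : ℕ) (hd : 2 ≤ d) :
    (∑ j ∈ Finset.range d, (-1 : ℝ) ^ (j + 1) * ((d - 1).choose j : ℝ) *
        Real.log ((j : ℝ) + 1) =
      ∫ u in (0 : ℝ)..1, (1 - u) ^ (d - 1) / (-Real.log u)) ∧
    1 / ((d : ℝ) * ((d : ℝ) - 1)) ≤
      ∑ j ∈ Finset.range d, (-1 : ℝ) ^ (j + 1) * ((d - 1).choose j : ℝ) *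
        Real.log ((j : ℝ) + 1) ∧
    ∑ j ∈ Finset.range d, (-1 : ℝ) ^ (j + 1) * ((d - 1).choose j : ℝ) *
        Real.log ((j : ℝ) + 1) ≤ 1 / ((d : ℝ) - 1) := by
  obtain ⟨k, rfl⟩ : ∃ k, d = k + 2 := ⟨d - 2, by omega⟩
  have hm : 1 ≤ k + 1 := by omega
  have hd1 : k + 2 - 1 = k + 1 := rfl
  rw [hd1]
  have heq : (∑ j ∈ Finset.range (k+2), (-1:ℝ)^(j+1) * (((k+1).choose j) : ℝ) *
      Real.log ((j:ℝ)+1))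
      = ∫ u in (0:ℝ)..1, (1-u)^(k+1) / (-Real.log u) := by
    have h1 : ∀ j ∈ Finset.range (k+2), (-1:ℝ)^(j+1) * (((k+1).choose j):ℝ) *
        Real.log ((j:ℝ)+1)
        = ∫ u in Ioc (0:ℝ) 1,
            (-1:ℝ)^(j+1) * (((k+1).choose j):ℝ) * ((u^j-1)/Real.log u) := by
      intro j _
      simp_rw [mul_assoc]
      rw [MeasureTheory.integral_const_mul, MeasureTheory.integral_const_mul, frullani j]
    rw [Finset.sum_congr rfl h1, ← MeasureTheory.integral_finset_sum]
    · rw [intervalIntegral.integral_of_le zero_le_one]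
      exact MeasureTheory.integral_congr_ae
        (Filter.Eventually.of_forall fun u => sum_identity (k+1) hm u)
    · intro j _
      exact (frullani_integrable j).const_mul _
  refine ⟨heq, ?_, ?_⟩
  · rw [heq]
    have hcont : IntervalIntegrable (fun u : ℝ => u * (1-u)^k) volume 0 1 := by
      apply Continuous.intervalIntegrable; continuity
    have hmono := intervalIntegral.integral_mono_ae_restrict zero_le_one hcont
      (h_integrable (k+1) hm) ?_
    · rw [int_lower k] at hmono
      refine le_trans (le_of_eq ?_) hmono
      push_cast
      ring_nf
    · filter_upwards [ae_restrict_mem measurableSet_Icc, ae_restrict_of_ae (ae_ne 0),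
        ae_restrict_of_ae (ae_ne 1)] with u hu h0 h1
      exact lower_pt (k+1) hm (lt_of_le_of_ne hu.1 (Ne.symm h0)) (lt_of_le_of_ne hu.2 h1)
  · rw [heq]
    have hcont : IntervalIntegrable (fun u : ℝ => (1-u)^k) volume 0 1 := by
      apply Continuous.intervalIntegrable; continuity
    have hmono := intervalIntegral.integral_mono_ae_restrict zero_le_one
      (h_integrable (k+1) hm) hcont ?_
    · rw [int_upper k] at hmono
      refine le_trans hmono (le_of_eq ?_)
      push_cast
      ring_nf
    · filter_upwards [ae_restrict_mem measurableSet_Icc, ae_restrict_of_ae (ae_ne 0),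
        ae_restrict_of_ae (ae_ne 1)] with u hu h0 h1
      exact upper_pt (k+1) hm (lt_of_le_of_ne hu.1 (Ne.symm h0)) (lt_of_le_of_ne hu.2 h1)
end
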